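/- Let γ : ℝ^d → ℝ be a continuous variogram and fix η ∈ ℝ^d. Then the function φ_η : ℝ^d → ℝ defined by φ_η(ξ) = 2γ(η) + 2γ(ξ) − γ(ξ + η) − γ(ξ − η) is a continuous variogram on ℝ^d; moreover φ_η(ξ) is symmetric in the pair (ξ, η), i.e. φ_η(ξ) = φ_ξ(η) for all ξ, η ∈ ℝ^d. -/
import Mathlib


open scoped BigOperators

/-- A variogram on `ℝ^d`: nonnegative at the origin, even, and conditionally negative
definite (for complex weights summing to zero, the quadratic form is real and `≤ 0`). -/
def IsVariogram {d : ℕ} (γ : EuclideanSpace ℝ (Fin d) → ℝ) : Prop :=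
  0 ≤ γ 0 ∧ (∀ ξ, γ (-ξ) = γ ξ) ∧
    ∀ (n : ℕ) (ξ : Fin n → EuclideanSpace ℝ (Fin d)) (a : Fin n → ℂ),
      (∑ i, a i) = 0 →
      (∑ i, ∑ j, a i * (γ (ξ i - ξ j) : ℂ) * (starRingEnd ℂ) (a j)).im = 0 ∧
      (∑ i, ∑ j, a i * (γ (ξ i - ξ j) : ℂ) * (starRingEnd ℂ) (a j)).re ≤ 0

lemma var_key {d n : ℕ} (γ : EuclideanSpace ℝ (Fin d) → ℝ) (η : EuclideanSpace ℝ (Fin d))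
    (ξ : Fin n → EuclideanSpace ℝ (Fin d)) (a : Fin n → ℂ) (ha : (∑ i, a i) = 0) :
    (∑ i, ∑ j, a i *
        ((2 * γ η + 2 * γ (ξ i - ξ j) - γ (ξ i - ξ j + η) - γ (ξ i - ξ j - η) : ℝ) : ℂ) *
        (starRingEnd ℂ) (a j))
    = ∑ i : Fin (n + n), ∑ j : Fin (n + n),
        Fin.append a (fun i => -a i) i *
          ((γ (Fin.append ξ (fun i => ξ i - η) i - Fin.append ξ (fun i => ξ i - η) j)) : ℂ) *
          (starRingEnd ℂ) (Fin.append a (fun i => -a i) j) := by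
  have hconj : (∑ j, (starRingEnd ℂ) (a j)) = 0 := by rw [← map_sum, ha, map_zero]
  have e1 : ∀ i j : Fin n, ξ i - (ξ j - η) = ξ i - ξ j + η := fun i j => by abel
  have e2 : ∀ i j : Fin n, ξ i - η - ξ j = ξ i - ξ j - η := fun i j => by abel
  have e3 : ∀ i j : Fin n, ξ i - η - (ξ j - η) = ξ i - ξ j := fun i j => by abel
  simp only [Fin.sum_univ_add, Fin.append_left, Fin.append_right, e1, e2, e3]
  push_cast
  have hz : (∑ i, ∑ j, a i * ((2:ℂ) * (γ η : ℂ)) * (starRingEnd ℂ) (a j)) = 0 := by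
    simp only [← Finset.mul_sum, hconj, mul_zero, Finset.sum_const_zero]
  calc (∑ i, ∑ j, a i *
        ((2:ℂ) * (γ η : ℂ) + 2 * (γ (ξ i - ξ j) : ℂ) - (γ (ξ i - ξ j + η) : ℂ) -
          (γ (ξ i - ξ j - η) : ℂ)) * (starRingEnd ℂ) (a j))
      = (∑ i, ∑ j, a i * ((2:ℂ) * (γ η : ℂ)) * (starRingEnd ℂ) (a j)) +
        (∑ i, ∑ j, (a i * (γ (ξ i - ξ j) : ℂ) * (starRingEnd ℂ) (a j) +
          a i * (γ (ξ i - ξ j + η) : ℂ) * (starRingEnd ℂ) (-a j) +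
          (-a i * (γ (ξ i - ξ j - η) : ℂ) * (starRingEnd ℂ) (a j) +
           -a i * (γ (ξ i - ξ j) : ℂ) * (starRingEnd ℂ) (-a j)))) := by
        rw [← Finset.sum_add_distrib]
        refine Finset.sum_congr rfl fun i _ => ?_
        rw [← Finset.sum_add_distrib]
        refine Finset.sum_congr rfl fun j _ => ?_
        simp only [map_neg]
        ring
    _ = _ := by
        rw [hz, zero_add]
        simp only [Finset.sum_add_distrib]

/-- If γ is a continuous variogram and η is fixed, then
φ_η(ξ) = 2γ(η) + 2γ(ξ) − γ(ξ+η) − γ(ξ−η) is a continuous variogram, and it is symmetric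
in the pair (ξ, η). -/
theorem stmt12 {d : ℕ} (γ : EuclideanSpace ℝ (Fin d) → ℝ)
    (hγ : IsVariogram γ) (hc : Continuous γ) (η : EuclideanSpace ℝ (Fin d)) :
    Continuous (fun ξ : EuclideanSpace ℝ (Fin d) =>
      2 * γ η + 2 * γ ξ - γ (ξ + η) - γ (ξ - η)) ∧
    IsVariogram (fun ξ : EuclideanSpace ℝ (Fin d) =>
      2 * γ η + 2 * γ ξ - γ (ξ + η) - γ (ξ - η)) ∧
    ∀ ξ : EuclideanSpace ℝ (Fin d),
      2 * γ η + 2 * γ ξ - γ (ξ + η) - γ (ξ - η) =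
      2 * γ ξ + 2 * γ η - γ (η + ξ) - γ (η - ξ) := by
  obtain ⟨h0, heven, hcnd⟩ := hγ
  refine ⟨?_, ⟨?_, ?_, ?_⟩, ?_⟩
  · fun_prop
  · simp only [zero_add, zero_sub, heven]
    linarith
  · intro ξ
    have e1 : -ξ + η = -(ξ - η) := by abel
    have e2 : -ξ - η = -(ξ + η) := by abel
    simp only [heven, e1, e2]
    ring
  · intro n ξ a ha
    have hkey := hcnd (n + n) (Fin.append ξ (fun i => ξ i - η))
      (Fin.append a (fun i => -a i)) (by
        simp only [Fin.sum_univ_add, Fin.append_left, Fin.append_right, Finset.sum_neg_distrib,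
          ha, neg_zero, add_zero])
    rw [var_key γ η ξ a ha]
    exact hkey
  · intro ξ
    have e1 : η - ξ = -(ξ - η) := by abel
    rw [e1, heven, add_comm η ξ]
    ring
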